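/- A finite commutative ring R is a chain ring (its ideals are linearly ordered by inclusion) if and only if R is a local ring whose maximal ideal is principal. -/

import Mathlib

lemma unit_mul_pow_dvd {R : Type*} [CommRing R] {u v π : R} (hu : IsUnit u) {m n : ℕ}
    (h : m ≤ n) : u * π ^ m ∣ v * π ^ n := by
  obtain ⟨w, hw⟩ := hu.exists_left_inv
  obtain ⟨c, hc⟩ := pow_dvd_pow π h
  exact ⟨w * v * c, by rw [hc]; linear_combination (-(v * π ^ m * c)) * hw⟩

/-- A finite commutative ring is a chain ring (ideals linearly ordered by inclusion)
iff it is a local ring whose maximal ideal is principal. -/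
theorem stmt_0 (R : Type*) [CommRing R] [Fintype R] [Nontrivial R] :
    (∀ I J : Ideal R, I ≤ J ∨ J ≤ I) ↔
      ∃ _ : IsLocalRing R, (IsLocalRing.maximalIdeal R).IsPrincipal := by
  constructor
  · intro h
    have hloc : IsLocalRing R := by
      apply IsLocalRing.of_unique_max_ideal
      obtain ⟨M, hM⟩ := Ideal.exists_maximal R
      refine ⟨M, hM, fun I hI => ?_⟩
      rcases h I M with hle | hle
      · exact hI.eq_of_le hM.ne_top hle
      · exact (hM.eq_of_le hI.ne_top hle).symm
    refine ⟨hloc, ?_⟩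
    have hfin : ((fun x : R => Ideal.span {x}) ''
        (IsLocalRing.maximalIdeal R : Set R)).Finite := Set.toFinite _
    obtain ⟨J, hJmem, hmax⟩ := hfin.exists_maximal
      ⟨Ideal.span {0}, ⟨0, (IsLocalRing.maximalIdeal R).zero_mem, rfl⟩⟩
    obtain ⟨x0, hx0, rfl⟩ := hJmem
    refine ⟨x0, le_antisymm ?_ ?_⟩
    · intro y hy
      rcases h (Ideal.span {y}) (Ideal.span {x0}) with hle | hle
      · exact hle (Ideal.subset_span rfl)
      · have h2 := le_antisymm hle (hmax ⟨y, hy, rfl⟩ hle)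
        show y ∈ Ideal.span {x0}
        rw [h2]
        exact Ideal.subset_span rfl
    · show Ideal.span {x0} ≤ IsLocalRing.maximalIdeal R
      rw [Ideal.span_le, Set.singleton_subset_iff]
      exact hx0
  · rintro ⟨hloc, ⟨π, hπ'⟩⟩
    have hπ : IsLocalRing.maximalIdeal R = Ideal.span {π} := hπ'
    have hart : IsArtinianRing R := inferInstance
    obtain ⟨k, hk⟩ : IsNilpotent (IsLocalRing.maximalIdeal R) := by
      have := IsArtinianRing.isNilpotent_jacobson_bot (R := R)
      rwa [IsLocalRing.jacobson_eq_maximalIdeal ⊥ bot_ne_top] at this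
    -- every nonzero element is a unit times a power of π
    have key : ∀ a : R, a ≠ 0 → ∃ (n : ℕ) (u : R), IsUnit u ∧ a = u * π ^ n := by
      intro a ha
      classical
      have hPk : a ∉ Ideal.span {π ^ k} := by
        rw [← Ideal.span_singleton_pow, ← hπ, hk]
        simpa using ha
      have hex : ∃ n, a ∉ Ideal.span {π ^ n} := ⟨k, hPk⟩
      have hnpos : Nat.find hex ≠ 0 := by
        intro h0
        have hs := Nat.find_spec hex
        rw [h0] at hs
        simp [Ideal.span_singleton_pow] at hs
      obtain ⟨m, hm⟩ := Nat.exists_eq_succ_of_ne_zero hnpos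
      have hmem : a ∈ Ideal.span {π ^ m} := by
        by_contra hc
        exact Nat.find_min hex (show m < Nat.find hex by omega) hc
      have hnot : a ∉ Ideal.span {π ^ (m + 1)} := by
        have hs := Nat.find_spec hex
        rwa [hm] at hs
      obtain ⟨u, hu⟩ := Ideal.mem_span_singleton'.mp hmem
      refine ⟨m, u, ?_, hu.symm⟩
      by_contra hunit
      have humem : u ∈ IsLocalRing.maximalIdeal R := hunit
      rw [hπ, Ideal.mem_span_singleton] at humem
      obtain ⟨c, rfl⟩ := humem
      apply hnot
      rw [Ideal.mem_span_singleton, ← hu]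
      exact ⟨c, by ring⟩
    intro I J
    have htot : IsTotal R (· ∣ ·) := by
      constructor
      intro a b
      by_cases ha : a = 0
      · exact Or.inr (ha ▸ dvd_zero b)
      by_cases hb : b = 0
      · exact Or.inl (hb ▸ dvd_zero a)
      obtain ⟨m, u, hu, rfl⟩ := key a ha
      obtain ⟨n, v, hv, rfl⟩ := key b hb
      rcases le_total m n with hle | hle
      · exact Or.inl (unit_mul_pow_dvd hu hle)
      · exact Or.inr (unit_mul_pow_dvd hv hle)
    have hpre := PreValuationRing.iff_dvd_total.mpr htot
    exact (PreValuationRing.iff_ideal_total.mp hpre).total I J
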